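/- Let (Ω, 𝒜, μ) be a probability space, T : Ω → Ω an invertible, ergodic, μ-preserving transformation, and c : Ω → ℝ a measurable function with c > 0 μ-a.e.; set c̄ = c + c∘T^{−1}. Assume both c and 1/c are μ-integrable. For ω ∈ Ω, let (X_n)_{n≥0} be the random walk on ℤ with X_0 = 0 which from state k jumps to k−1 with probability c(T^{k−1}ω)/c̄(T^kω) and to k+1 with probability c(T^kω)/c̄(T^kω), and let E_ω denote expectation over the walk for fixed ω. Then for μ-almost every ω, lim_{n→∞} E_ω(X_n²)/n = [ (∫_Ω c dμ)(∫_Ω (1/c) dμ) ]^{−1}. -/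

import Mathlib

open Finset Filter MeasureTheory

/-- Law of the random walk on `ℤ` among conductances `c`, started at `0`:
from state `k` it jumps to `k-1` with probability `c (k-1) / (c k + c (k-1))`
and to `k+1` with probability `c k / (c k + c (k-1))`. -/
noncomputable def walkLaw (c : ℤ → ℝ) : ℕ → ℤ → ℝ
  | 0, m => if m = 0 then 1 else 0
  | n + 1, m =>
      walkLaw c n (m + 1) * (c m / (c (m + 1) + c m)) +
        walkLaw c n (m - 1) * (c (m - 1) / (c (m - 1) + c (m - 2)))

/-- The `k`-th iterate (`k : ℤ`) of an invertible transformation `T`. -/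
def zIter {Ω : Type*} [MeasurableSpace Ω] (T : Ω ≃ᵐ Ω) (k : ℤ) (ω : Ω) : Ω :=
  if 0 ≤ k then T^[k.toNat] ω else T.symm^[(-k).toNat] ω


/-- Signed sum `∑_{0 ≤ j < k} u j` (with the usual sign convention for `k < 0`). -/
noncomputable def zsum (u : ℤ → ℝ) (k : ℤ) : ℝ :=
  ∑ j ∈ Finset.Ico (0:ℤ) k, u j - ∑ j ∈ Finset.Ico k (0:ℤ), u j

lemma zsum_zero (u : ℤ → ℝ) : zsum u 0 = 0 := by simp [zsum]

lemma zsum_succ (u : ℤ → ℝ) (k : ℤ) : zsum u (k+1) = zsum u k + u k := by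
  rcases le_or_gt 0 k with hk | hk
  · have h1 : Finset.Ico (0:ℤ) (k+1) = insert k (Finset.Ico (0:ℤ) k) := by
      ext j; simp; omega
    have h2 : k ∉ Finset.Ico (0:ℤ) k := by simp
    rw [zsum, zsum, h1, Finset.sum_insert h2]
    rw [Finset.Ico_eq_empty (show ¬ (k+1:ℤ) < 0 by omega),
      Finset.Ico_eq_empty (show ¬ (k:ℤ) < 0 by omega)]
    simp; ring
  · have h1 : Finset.Ico k (0:ℤ) = insert k (Finset.Ico (k+1) (0:ℤ)) := by
      ext j; simp; omega
    have h2 : k ∉ Finset.Ico (k+1) (0:ℤ) := by simp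
    rw [zsum, zsum, h1, Finset.sum_insert h2]
    rw [Finset.Ico_eq_empty (show ¬ (0:ℤ) < k+1 by omega),
      Finset.Ico_eq_empty (show ¬ (0:ℤ) < k by omega)]
    simp

lemma zsum_sub_smul (u v : ℤ → ℝ) (γ : ℝ) (k : ℤ) :
    zsum (fun j => u j - γ * v j) k = zsum u k - γ * zsum v k := by
  simp only [zsum, Finset.sum_sub_distrib, mul_sub, Finset.mul_sum]
  ring

lemma zsum_natCast (u : ℤ → ℝ) (n : ℕ) :
    zsum u (n : ℤ) = ∑ k ∈ Finset.range n, u (k : ℤ) := by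
  induction n with
  | zero => simp [zsum_zero]
  | succ n ih =>
      have h : ((n+1 : ℕ) : ℤ) = (n : ℤ) + 1 := by push_cast; ring
      rw [h, zsum_succ, ih, Finset.sum_range_succ]

lemma zsum_neg_natCast (u : ℤ → ℝ) (n : ℕ) :
    zsum u (-(n : ℤ)) = -∑ k ∈ Finset.range n, u (-1 - (k : ℤ)) := by
  induction n with
  | zero => simp [zsum_zero]
  | succ n ih =>
      have key := zsum_succ u (-(n:ℤ)-1)
      have h0 : (-(n:ℤ)-1) + 1 = -(n:ℤ) := by ring
      rw [h0] at key
      have h1 : (-(((n:ℕ)+1 : ℕ)) : ℤ) = -(n:ℤ)-1 := by push_cast; ring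
      have h2 : (-1 - (n:ℤ)) = -(n:ℤ)-1 := by ring
      rw [h1, Finset.sum_range_succ, h2]
      have : zsum u (-(n:ℤ)-1) = zsum u (-(n:ℤ)) - u (-(n:ℤ)-1) := by linarith
      rw [this, ih]; ring

/-- bound `|zsum u k|` by `M * |zsum v k|` when `|u| ≤ M v` on the window. -/
lemma abs_zsum_le {u v : ℤ → ℝ} {k : ℤ} {M : ℝ}
    (hv : ∀ j, 0 ≤ v j)
    (hM : ∀ j, j ∈ Finset.Ico (0:ℤ) k ∪ Finset.Ico k (0:ℤ) → |u j| ≤ M * v j) :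
    |zsum u k| ≤ M * |zsum v k| := by
  rcases le_or_gt 0 k with hk | hk
  · have he : Finset.Ico k (0:ℤ) = ∅ := Finset.Ico_eq_empty (by omega)
    rw [zsum, zsum, he]
    simp only [Finset.sum_empty, sub_zero]
    have h1 : |∑ j ∈ Finset.Ico (0:ℤ) k, u j| ≤ ∑ j ∈ Finset.Ico (0:ℤ) k, M * v j := by
      refine (Finset.abs_sum_le_sum_abs _ _).trans (Finset.sum_le_sum ?_)
      intro j hj; exact hM j (by rw [Finset.mem_union]; exact Or.inl hj)
    rw [abs_of_nonneg (Finset.sum_nonneg fun j _ => hv j)]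
    simpa [Finset.mul_sum] using h1
  · have he : Finset.Ico (0:ℤ) k = ∅ := Finset.Ico_eq_empty (by omega)
    rw [zsum, zsum, he]
    simp only [Finset.sum_empty, zero_sub, abs_neg]
    have h1 : |∑ j ∈ Finset.Ico k (0:ℤ), u j| ≤ ∑ j ∈ Finset.Ico k (0:ℤ), M * v j := by
      refine (Finset.abs_sum_le_sum_abs _ _).trans (Finset.sum_le_sum ?_)
      intro j hj; exact hM j (by rw [Finset.mem_union]; exact Or.inr hj)
    rw [abs_of_nonneg (Finset.sum_nonneg fun j _ => hv j)]
    simpa [Finset.mul_sum] using h1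

/-- Expectation of `f` under the time-`n` law. -/
noncomputable def Ex (c : ℤ → ℝ) (n : ℕ) (f : ℤ → ℝ) : ℝ :=
  ∑ m ∈ Finset.Icc (-(n:ℤ)) (n:ℤ), walkLaw c n m * f m

lemma walkLaw_zero_apply (c : ℤ → ℝ) (m : ℤ) :
    walkLaw c 0 m = if m = 0 then 1 else 0 := rfl

lemma walkLaw_succ_apply (c : ℤ → ℝ) (n : ℕ) (m : ℤ) :
    walkLaw c (n+1) m = walkLaw c n (m + 1) * (c m / (c (m + 1) + c m)) +
        walkLaw c n (m - 1) * (c (m - 1) / (c (m - 1) + c (m - 2))) := rfl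

lemma walkLaw_eq_zero (c : ℤ → ℝ) :
    ∀ n : ℕ, ∀ m : ℤ, ((n:ℤ) < m ∨ m < -(n:ℤ)) → walkLaw c n m = 0 := by
  intro n
  induction n with
  | zero =>
      intro m hm
      have : m ≠ 0 := by push_cast at hm; omega
      rw [walkLaw_zero_apply, if_neg this]
  | succ n ih =>
      intro m hm
      have h1 : walkLaw c n (m+1) = 0 := ih (m+1) (by push_cast at hm ⊢; omega)
      have h2 : walkLaw c n (m-1) = 0 := ih (m-1) (by push_cast at hm ⊢; omega)
      rw [walkLaw_succ_apply, h1, h2]; ring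

lemma walkLaw_nonneg (c : ℤ → ℝ) (hc : ∀ k, 0 < c k) :
    ∀ n : ℕ, ∀ m : ℤ, 0 ≤ walkLaw c n m := by
  intro n
  induction n with
  | zero =>
      intro m; rw [walkLaw_zero_apply]
      by_cases h : m = 0 <;> simp [h]
  | succ n ih =>
      intro m
      have d1 : 0 ≤ c m / (c (m+1) + c m) :=
        div_nonneg (hc m).le (add_pos (hc _) (hc _)).le
      have d2 : 0 ≤ c (m-1) / (c (m-1) + c (m-2)) :=
        div_nonneg (hc (m-1)).le (add_pos (hc _) (hc _)).le
      rw [walkLaw_succ_apply]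
      exact add_nonneg (mul_nonneg (ih (m+1)) d1) (mul_nonneg (ih (m-1)) d2)

lemma Ex_zero (c : ℤ → ℝ) (f : ℤ → ℝ) : Ex c 0 f = f 0 := by
  simp [Ex, walkLaw_zero_apply]

/-- One-step evolution of expectations. -/
lemma Ex_succ (c : ℤ → ℝ) (n : ℕ) (f : ℤ → ℝ) :
    Ex c (n+1) f
      = Ex c n (fun k => c (k-1) / (c k + c (k-1)) * f (k-1)
          + c k / (c k + c (k-1)) * f (k+1)) := by
  have key : Ex c (n+1) f
      = (∑ m ∈ Finset.Icc (-((n:ℤ)+1)) ((n:ℤ)+1),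
          walkLaw c n (m+1) * (c m / (c (m+1) + c m)) * f m)
        + (∑ m ∈ Finset.Icc (-((n:ℤ)+1)) ((n:ℤ)+1),
          walkLaw c n (m-1) * (c (m-1) / (c (m-1) + c (m-2))) * f m) := by
    rw [Ex, ← Finset.sum_add_distrib]
    have hcast : ((n+1 : ℕ) : ℤ) = (n:ℤ)+1 := by push_cast; ring
    rw [hcast]
    refine Finset.sum_congr rfl fun m _ => ?_
    rw [walkLaw_succ_apply]; ring
  have s1 : (∑ m ∈ Finset.Icc (-((n:ℤ)+1)) ((n:ℤ)+1),
          walkLaw c n (m+1) * (c m / (c (m+1) + c m)) * f m)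
      = ∑ k ∈ Finset.Icc (-(n:ℤ)) (n:ℤ),
          walkLaw c n k * (c (k-1) / (c k + c (k-1)) * f (k-1)) := by
    have shrink : (∑ m ∈ Finset.Icc (-((n:ℤ)+1)) ((n:ℤ)+1),
          walkLaw c n (m+1) * (c m / (c (m+1) + c m)) * f m)
        = ∑ m ∈ Finset.Icc (-(n:ℤ)-1) ((n:ℤ)-1),
          walkLaw c n (m+1) * (c m / (c (m+1) + c m)) * f m := by
      refine (Finset.sum_subset ?_ ?_).symm
      · intro m hm; simp only [Finset.mem_Icc] at hm ⊢; omega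
      · intro m hm hm'
        simp only [Finset.mem_Icc] at hm hm'
        rw [walkLaw_eq_zero c n (m+1) (by omega), zero_mul, zero_mul]
    rw [shrink]
    refine Finset.sum_nbij' (fun m => m + 1) (fun k => k - 1) ?_ ?_ ?_ ?_ ?_
    · intro m hm; simp only [Finset.mem_Icc] at hm ⊢; omega
    · intro k hk; simp only [Finset.mem_Icc] at hk ⊢; omega
    · intro m _; ring
    · intro k _; ring
    · intro m _
      have e1 : m + 1 - 1 = m := by ring
      rw [e1]; ring
  have s2 : (∑ m ∈ Finset.Icc (-((n:ℤ)+1)) ((n:ℤ)+1),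
          walkLaw c n (m-1) * (c (m-1) / (c (m-1) + c (m-2))) * f m)
      = ∑ k ∈ Finset.Icc (-(n:ℤ)) (n:ℤ),
          walkLaw c n k * (c k / (c k + c (k-1)) * f (k+1)) := by
    have shrink : (∑ m ∈ Finset.Icc (-((n:ℤ)+1)) ((n:ℤ)+1),
          walkLaw c n (m-1) * (c (m-1) / (c (m-1) + c (m-2))) * f m)
        = ∑ m ∈ Finset.Icc (-(n:ℤ)+1) ((n:ℤ)+1),
          walkLaw c n (m-1) * (c (m-1) / (c (m-1) + c (m-2))) * f m := by
      refine (Finset.sum_subset ?_ ?_).symm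
      · intro m hm; simp only [Finset.mem_Icc] at hm ⊢; omega
      · intro m hm hm'
        simp only [Finset.mem_Icc] at hm hm'
        rw [walkLaw_eq_zero c n (m-1) (by omega), zero_mul, zero_mul]
    rw [shrink]
    refine Finset.sum_nbij' (fun m => m - 1) (fun k => k + 1) ?_ ?_ ?_ ?_ ?_
    · intro m hm; simp only [Finset.mem_Icc] at hm ⊢; omega
    · intro k hk; simp only [Finset.mem_Icc] at hk ⊢; omega
    · intro m _; ring
    · intro k _; ring
    · intro m _
      have e1 : m - 1 + 1 = m := by ring
      have e2 : m - 1 - 1 = m - 2 := by ring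
      rw [e1, e2]; ring
  rw [key, s1, s2, Ex, ← Finset.sum_add_distrib]
  refine Finset.sum_congr rfl fun k _ => ?_
  ring

lemma Ex_congr (c : ℤ → ℝ) (n : ℕ) {f g : ℤ → ℝ} (h : ∀ k, f k = g k) :
    Ex c n f = Ex c n g := by
  unfold Ex; exact Finset.sum_congr rfl fun m _ => by rw [h]

lemma Ex_one (c : ℤ → ℝ) (hc : ∀ k, 0 < c k) (n : ℕ) : Ex c n (fun _ => 1) = 1 := by
  induction n with
  | zero => simp [Ex_zero]
  | succ n ih =>
      rw [Ex_succ, Ex_congr c n (g := fun _ => (1:ℝ)) ?_]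
      · exact ih
      · intro k
        have h1 : c k + c (k-1) ≠ 0 := (add_pos (hc _) (hc _)).ne'
        field_simp
        ring

lemma Ex_add (c : ℤ → ℝ) (n : ℕ) (f g : ℤ → ℝ) :
    Ex c n (fun k => f k + g k) = Ex c n f + Ex c n g := by
  simp [Ex, ← Finset.sum_add_distrib, mul_add]

lemma Ex_smul (c : ℤ → ℝ) (n : ℕ) (a : ℝ) (f : ℤ → ℝ) :
    Ex c n (fun k => a * f k) = a * Ex c n f := by
  simp only [Ex, Finset.mul_sum]
  exact Finset.sum_congr rfl fun m _ => by ring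

lemma Ex_const (c : ℤ → ℝ) (hc : ∀ k, 0 < c k) (n : ℕ) (a : ℝ) :
    Ex c n (fun _ => a) = a := by
  have := Ex_smul c n a (fun _ => 1)
  simp only [mul_one] at this
  rw [this, Ex_one c hc n, mul_one]

lemma Ex_mono (c : ℤ → ℝ) (hc : ∀ k, 0 < c k) (n : ℕ) {f g : ℤ → ℝ}
    (h : ∀ k, f k ≤ g k) : Ex c n f ≤ Ex c n g :=
  Finset.sum_le_sum fun m _ =>
    mul_le_mul_of_nonneg_left (h m) (walkLaw_nonneg c hc n m)

lemma abs_Ex_le (c : ℤ → ℝ) (hc : ∀ k, 0 < c k) (n : ℕ) {f g : ℤ → ℝ}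
    (h : ∀ k, |f k| ≤ g k) : |Ex c n f| ≤ Ex c n g := by
  calc |Ex c n f| ≤ ∑ m ∈ Finset.Icc (-(n:ℤ)) (n:ℤ), |walkLaw c n m * f m| :=
        Finset.abs_sum_le_sum_abs _ _
    _ ≤ Ex c n g := by
        refine Finset.sum_le_sum fun m _ => ?_
        rw [abs_mul, abs_of_nonneg (walkLaw_nonneg c hc n m)]
        exact mul_le_mul_of_nonneg_left (h m) (walkLaw_nonneg c hc n m)

/-! ### Linear / quadratic growth bounds -/

def LinBnd (f : ℤ → ℝ) : Prop :=
  ∀ ε > (0:ℝ), ∃ C, 0 ≤ C ∧ ∀ k : ℤ, |f k| ≤ ε * |(k:ℝ)| + C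

def QuadBnd (f : ℤ → ℝ) : Prop :=
  ∀ ε > (0:ℝ), ∃ C, 0 ≤ C ∧ ∀ k : ℤ, |f k| ≤ ε * (k:ℝ)^2 + C

lemma LinBnd.add {f g : ℤ → ℝ} (hf : LinBnd f) (hg : LinBnd g) :
    LinBnd (fun k => f k + g k) := by
  intro ε hε
  obtain ⟨Cf, hCf0, hCf⟩ := hf (ε/2) (by linarith)
  obtain ⟨Cg, hCg0, hCg⟩ := hg (ε/2) (by linarith)
  refine ⟨Cf + Cg, by linarith, fun k => ?_⟩
  calc |f k + g k| ≤ |f k| + |g k| := abs_add_le _ _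
    _ ≤ (ε/2 * |(k:ℝ)| + Cf) + (ε/2 * |(k:ℝ)| + Cg) := add_le_add (hCf k) (hCg k)
    _ = ε * |(k:ℝ)| + (Cf + Cg) := by ring

lemma LinBnd.const_mul {f : ℤ → ℝ} (r : ℝ) (hf : LinBnd f) :
    LinBnd (fun k => r * f k) := by
  intro ε hε
  have hr : (0:ℝ) < |r| + 1 := by positivity
  obtain ⟨C, hC0, hC⟩ := hf (ε/(|r|+1)) (by positivity)
  refine ⟨(|r|+1) * C, by positivity, fun k => ?_⟩
  have h1 : |r * f k| ≤ (|r|+1) * |f k| := by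
    rw [abs_mul]
    exact mul_le_mul_of_nonneg_right (by linarith [abs_nonneg r]) (abs_nonneg _)
  calc |r * f k| ≤ (|r|+1) * (ε/(|r|+1) * |(k:ℝ)| + C) :=
        h1.trans (mul_le_mul_of_nonneg_left (hC k) (by positivity))
    _ = ε * |(k:ℝ)| + (|r|+1) * C := by field_simp

lemma LinBnd.sub {f g : ℤ → ℝ} (hf : LinBnd f) (hg : LinBnd g) :
    LinBnd (fun k => f k - g k) := by
  have := hf.add (hg.const_mul (-1))
  simpa [sub_eq_add_neg] using this

lemma LinBnd.shift {f : ℤ → ℝ} (hf : LinBnd f) : LinBnd (fun k => f (k+1)) := by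
  intro ε hε
  obtain ⟨C, hC0, hC⟩ := hf ε hε
  refine ⟨ε + C, by linarith, fun k => ?_⟩
  have h1 : |((k+1 : ℤ):ℝ)| ≤ |(k:ℝ)| + 1 := by
    push_cast
    calc |(k:ℝ) + 1| ≤ |(k:ℝ)| + |(1:ℝ)| := abs_add_le _ _
      _ = |(k:ℝ)| + 1 := by norm_num
  calc |f (k+1)| ≤ ε * |((k+1:ℤ):ℝ)| + C := hC (k+1)
    _ ≤ ε * (|(k:ℝ)| + 1) + C := by nlinarith
    _ = ε * |(k:ℝ)| + (ε + C) := by ring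

lemma abs_int_le_quad {δ : ℝ} (hδ : 0 < δ) (x : ℝ) : |x| ≤ δ * x^2 + 1/(4*δ) := by
  have h1 : (4*δ)*|x| ≤ (4*δ)*(δ*x^2+1/(4*δ)) := by
    have expand : (4*δ)*(δ*x^2+1/(4*δ)) = 4*δ^2*x^2 + 1 := by field_simp
    rw [expand]
    nlinarith [sq_nonneg (2*δ*|x| - 1), sq_abs x]
  exact le_of_mul_le_mul_left h1 (by positivity)

lemma quadBnd_of_mul_bound {f h : ℤ → ℝ} {c₁ c₂ : ℝ} (hc₁ : 0 ≤ c₁) (hc₂ : 0 ≤ c₂)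
    (hb : ∀ ε > (0:ℝ), ∃ C, 0 ≤ C ∧ ∀ k : ℤ, |f k| ≤ (ε * |(k:ℝ)| + C) * |h k|)
    (hh : ∀ k : ℤ, |h k| ≤ c₁ * |(k:ℝ)| + c₂) : QuadBnd f := by
  intro ε hε
  have hc₁1 : (0:ℝ) < c₁ + 1 := by linarith
  obtain ⟨C', hC'0, hC'⟩ := hb (ε/(2*(c₁+1))) (by positivity)
  set D : ℝ := (ε/(2*(c₁+1))) * c₂ + C' * c₁ with hD
  have hD0 : 0 ≤ D := by positivity
  set δ : ℝ := ε/(2*(D+1)) with hδdef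
  have hδ : 0 < δ := by positivity
  refine ⟨C' * c₂ + D * (1/(4*δ)), by positivity, fun k => ?_⟩
  have habs : 0 ≤ |(k:ℝ)| := abs_nonneg _
  have hsq : |(k:ℝ)|^2 = (k:ℝ)^2 := sq_abs _
  have step1 : |f k| ≤ (ε/(2*(c₁+1)) * |(k:ℝ)| + C') * (c₁ * |(k:ℝ)| + c₂) := by
    refine (hC' k).trans (mul_le_mul_of_nonneg_left (hh k) ?_)
    positivity
  have step2 : (ε/(2*(c₁+1)) * |(k:ℝ)| + C') * (c₁ * |(k:ℝ)| + c₂)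
      = (ε/(2*(c₁+1)) * c₁) * (k:ℝ)^2 + D * |(k:ℝ)| + C' * c₂ := by
    rw [← hsq]; ring
  have step3 : D * |(k:ℝ)| ≤ D * (δ * (k:ℝ)^2 + 1/(4*δ)) :=
    mul_le_mul_of_nonneg_left (abs_int_le_quad hδ _) hD0
  have key1 : ε/(2*(c₁+1)) * c₁ ≤ ε/2 := by
    rw [div_mul_eq_mul_div, div_le_iff₀ (by positivity)]
    nlinarith
  have key2 : D * δ ≤ ε/2 := by
    rw [hδdef, show D * (ε/(2*(D+1))) = ε*D/(2*(D+1)) by ring,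
      div_le_div_iff₀ (by positivity) (by norm_num : (0:ℝ) < 2)]
    nlinarith
  have hk2 : (0:ℝ) ≤ (k:ℝ)^2 := sq_nonneg _
  calc |f k| ≤ (ε/(2*(c₁+1)) * c₁) * (k:ℝ)^2 + D * (δ * (k:ℝ)^2 + 1/(4*δ)) + C' * c₂ := by
        rw [step2] at step1; linarith
    _ = (ε/(2*(c₁+1)) * c₁ + D * δ) * (k:ℝ)^2 + (C' * c₂ + D * (1/(4*δ))) := by ring
    _ ≤ ε * (k:ℝ)^2 + (C' * c₂ + D * (1/(4*δ))) := by nlinarith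

lemma quadBnd_of_linBnd {f : ℤ → ℝ} (hf : LinBnd f) : QuadBnd f := by
  intro ε hε
  obtain ⟨C, hC0, hC⟩ := hf ε hε
  refine ⟨ε + C, by linarith, fun k => ?_⟩
  have h1 : |(k:ℝ)| ≤ (k:ℝ)^2 + 1 := by
    rcases eq_or_ne k 0 with rfl | hk
    · norm_num
    · have h2 : (1:ℤ) ≤ |k| := Int.one_le_abs hk
      have h3 : |k| ≤ k^2 := by nlinarith [abs_nonneg k, sq_abs k]
      have h4 : |(k:ℝ)| ≤ (k:ℝ)^2 := by exact_mod_cast h3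
      linarith
  calc |f k| ≤ ε * |(k:ℝ)| + C := hC k
    _ ≤ ε * ((k:ℝ)^2 + 1) + C := by nlinarith
    _ = ε * (k:ℝ)^2 + (ε + C) := by ring

/-! ### Harmonic coordinates and the corrector -/

noncomputable def Hf (c : ℤ → ℝ) : ℤ → ℝ := zsum (fun j => (c j)⁻¹)
noncomputable def Gf (c : ℤ → ℝ) (γ : ℝ) : ℤ → ℝ := fun k => (c k)⁻¹ - γ * c k
noncomputable def Sf (c : ℤ → ℝ) (γ : ℝ) : ℤ → ℝ := zsum (Gf c γ)
noncomputable def Ff (c : ℤ → ℝ) (γ : ℝ) : ℤ → ℝ := fun k => Gf c γ k + 2 * Sf c γ k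
noncomputable def psif (c : ℤ → ℝ) (γ : ℝ) : ℤ → ℝ := zsum (fun j => Ff c γ j / c j)
noncomputable def gf (c : ℤ → ℝ) : ℤ → ℝ := fun k => ((c k)⁻¹ + (c (k-1))⁻¹) / (c k + c (k-1))

lemma I2 (c : ℤ → ℝ) (hc : ∀ k, 0 < c k) (k : ℤ) :
    c (k-1)/(c k + c (k-1)) * (Hf c (k-1))^2 + c k/(c k + c (k-1)) * (Hf c (k+1))^2
      = (Hf c k)^2 + gf c k := by
  have hck := (hc k).ne'
  have hck1 := (hc (k-1)).ne'
  have hsum : c k + c (k-1) ≠ 0 := (add_pos (hc k) (hc (k-1))).ne'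
  have e1 : Hf c (k+1) = Hf c k + (c k)⁻¹ := zsum_succ _ k
  have e2 : Hf c k = Hf c (k-1) + (c (k-1))⁻¹ := by
    have h := zsum_succ (fun j => (c j)⁻¹) (k-1)
    rw [show k - 1 + 1 = k by ring] at h
    exact h
  rw [e1, e2]
  simp only [gf]
  field_simp
  ring

lemma I3 (c : ℤ → ℝ) (hc : ∀ k, 0 < c k) (γ : ℝ) (k : ℤ) :
    c (k-1)/(c k + c (k-1)) * psif c γ (k-1) + c k/(c k + c (k-1)) * psif c γ (k+1)
      = psif c γ k + gf c k - γ := by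
  have hck := (hc k).ne'
  have hck1 := (hc (k-1)).ne'
  have hsum : c k + c (k-1) ≠ 0 := (add_pos (hc k) (hc (k-1))).ne'
  have e1 : psif c γ (k+1) = psif c γ k + Ff c γ k / c k := zsum_succ _ k
  have e2 : psif c γ k = psif c γ (k-1) + Ff c γ (k-1) / c (k-1) := by
    have h := zsum_succ (fun j => Ff c γ j / c j) (k-1)
    rw [show k - 1 + 1 = k by ring] at h
    exact h
  have e3 : Sf c γ k = Sf c γ (k-1) + Gf c γ (k-1) := by
    have h := zsum_succ (Gf c γ) (k-1)
    rw [show k - 1 + 1 = k by ring] at h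
    exact h
  rw [e1, e2]
  simp only [Ff, Gf, gf, e3]
  field_simp
  ring

/-- The exact identity `E_n(h²) = E_n(ψ) + γ n`. -/
lemma Ex_H2_eq (c : ℤ → ℝ) (hc : ∀ k, 0 < c k) (γ : ℝ) (n : ℕ) :
    Ex c n (fun k => (Hf c k)^2) = Ex c n (psif c γ) + γ * n := by
  induction n with
  | zero =>
      rw [Ex_zero, Ex_zero]
      have h1 : Hf c 0 = 0 := zsum_zero _
      have h2 : psif c γ 0 = 0 := zsum_zero _
      rw [h1, h2]; norm_num
  | succ n ih =>
      have hH : Ex c (n+1) (fun k => (Hf c k)^2)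
          = Ex c n (fun k => (Hf c k)^2) + Ex c n (gf c) := by
        rw [Ex_succ, Ex_congr c n (g := fun k => (Hf c k)^2 + gf c k)
          (fun k => I2 c hc k), Ex_add]
      have hP : Ex c (n+1) (psif c γ)
          = Ex c n (psif c γ) + (Ex c n (gf c) - γ) := by
        rw [Ex_succ, Ex_congr c n (g := fun k => psif c γ k + (gf c k + (-γ)))
          (fun k => by have := I3 c hc γ k; linarith), Ex_add, Ex_add,
          Ex_const c hc n (-γ)]
        ring
      have hcast : ((n+1 : ℕ) : ℝ) = (n:ℝ) + 1 := by push_cast; ring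
      rw [hH, hP, ih, hcast]
      ring

set_option maxHeartbeats 1000000 in
/-- The main deterministic theorem. -/
theorem det_main (c : ℤ → ℝ) (hc : ∀ k, 0 < c k) (a b : ℝ) (ha : 0 < a) (hb : 0 < b)
    (hA : LinBnd (fun k => zsum c k - a * k))
    (hB : LinBnd (fun k => zsum (fun j => (c j)⁻¹) k - b * k)) :
    Filter.Tendsto (fun n : ℕ => Ex c n (fun m => (m:ℝ)^2) / n)
      Filter.atTop (nhds ((a*b)⁻¹)) := by
  set γ : ℝ := b / a with hγdef
  have hγ0 : 0 < γ := div_pos hb ha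
  have hγa : γ * a = b := div_mul_cancel₀ b ha.ne'
  -- `S = (H - b·) - γ(A - a·)`
  have Sf_eq : ∀ k : ℤ, Sf c γ k
      = (Hf c k - b * k) - γ * (zsum c k - a * k) := by
    intro k
    have h1 : Sf c γ k = Hf c k - γ * zsum c k :=
      zsum_sub_smul (fun j => (c j)⁻¹) c γ k
    rw [h1]
    linear_combination (-(k:ℝ)) * hγa
  have LB_S : LinBnd (Sf c γ) := by
    have h := hB.sub (hA.const_mul γ)
    intro ε hε
    obtain ⟨C, hC0, hC⟩ := h ε hε
    exact ⟨C, hC0, fun k => by rw [Sf_eq k]; exact hC k⟩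
  have LB_G : LinBnd (Gf c γ) := by
    have hGS : ∀ k : ℤ, Gf c γ k = Sf c γ (k+1) - Sf c γ k := by
      intro k
      have h := zsum_succ (Gf c γ) k
      have : Sf c γ (k+1) = Sf c γ k + Gf c γ k := h
      linarith
    have h := (LB_S.shift).sub LB_S
    intro ε hε
    obtain ⟨C, hC0, hC⟩ := h ε hε
    exact ⟨C, hC0, fun k => by rw [hGS k]; exact hC k⟩
  have LB_F : LinBnd (Ff c γ) := by
    have h := LB_G.add (LB_S.const_mul 2)
    intro ε hε
    obtain ⟨C, hC0, hC⟩ := h ε hε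
    exact ⟨C, hC0, fun k => by
      have : Ff c γ k = Gf c γ k + 2 * Sf c γ k := rfl
      rw [this]; exact hC k⟩
  -- affine bound on H
  obtain ⟨C₀, hC₀0, hC₀⟩ := hB 1 one_pos
  have hHaff : ∀ k : ℤ, |Hf c k| ≤ (b+1) * |(k:ℝ)| + C₀ := by
    intro k
    have h1 : |Hf c k - b * k| ≤ 1 * |(k:ℝ)| + C₀ := hC₀ k
    have h2 : |b * (k:ℝ)| = b * |(k:ℝ)| := by
      rw [abs_mul, abs_of_pos hb]
    have h3 : |Hf c k| ≤ |Hf c k - b * k| + |b * (k:ℝ)| := by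
      calc |Hf c k| = |(Hf c k - b * k) + b * k| := by ring_nf
        _ ≤ |Hf c k - b * k| + |b * (k:ℝ)| := abs_add_le _ _
    rw [h2] at h3
    linarith
  -- multiplicative bound for ψ
  have hψb : ∀ ε > (0:ℝ), ∃ C, 0 ≤ C ∧ ∀ k : ℤ,
      |psif c γ k| ≤ (ε * |(k:ℝ)| + C) * |Hf c k| := by
    intro ε hε
    obtain ⟨C, hC0, hCF⟩ := LB_F ε hε
    refine ⟨C, hC0, fun k => ?_⟩
    refine abs_zsum_le (fun j => inv_nonneg.2 (hc j).le) ?_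
    intro j hj
    have hjk : |(j:ℝ)| ≤ |(k:ℝ)| := by
      have : |j| ≤ |k| := by
        simp only [Finset.mem_union, Finset.mem_Ico] at hj
        have t1 := le_abs_self k
        have t2 := neg_abs_le k
        rw [abs_le]
        omega
      exact_mod_cast this
    rw [abs_div, abs_of_pos (hc j), div_eq_mul_inv]
    refine mul_le_mul_of_nonneg_right ((hCF j).trans ?_) (inv_nonneg.2 (hc j).le)
    nlinarith
  have QB_ψ : QuadBnd (psif c γ) :=
    quadBnd_of_mul_bound (by linarith : (0:ℝ) ≤ b+1) hC₀0 hψb hHaff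
  -- quadratic bound for H² - b²k²
  have QB_H2 : QuadBnd (fun k => (Hf c k)^2 - b^2*(k:ℝ)^2) := by
    refine quadBnd_of_mul_bound (c₁ := 2*b+1) (c₂ := C₀)
      (by linarith) hC₀0 ?_ (h := fun k => Hf c k + b*k) ?_
    · intro ε hε
      obtain ⟨C, hC0, hCB⟩ := hB ε hε
      refine ⟨C, hC0, fun k => ?_⟩
      show |(Hf c k)^2 - b^2*(k:ℝ)^2| ≤ (ε * |(k:ℝ)| + C) * |Hf c k + b*k|
      have hfac : (Hf c k)^2 - b^2*(k:ℝ)^2 = (Hf c k - b*k) * (Hf c k + b*k) := by ring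
      rw [hfac, abs_mul]
      refine mul_le_mul_of_nonneg_right ?_ (abs_nonneg _)
      exact hCB k
    · intro k
      have h2 : |b * (k:ℝ)| = b * |(k:ℝ)| := by rw [abs_mul, abs_of_pos hb]
      calc |Hf c k + b*k| ≤ |Hf c k| + |b*(k:ℝ)| := abs_add_le _ _
        _ ≤ ((b+1) * |(k:ℝ)| + C₀) + b * |(k:ℝ)| := by rw [h2]; exact add_le_add_left (hHaff k) _
        _ = (2*b+1) * |(k:ℝ)| + C₀ := by ring
  -- lower bound: k² ≲ H²
  obtain ⟨C₂, hC₂0, hC₂⟩ := hB (b/2) (by positivity)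
  have hk2 : ∀ k : ℤ, (k:ℝ)^2 ≤ 8/b^2*(Hf c k)^2 + 8/b^2*C₂^2 := by
    intro k
    have h1 : |Hf c k - b * k| ≤ (b/2) * |(k:ℝ)| + C₂ := hC₂ k
    have h2 : b * |(k:ℝ)| = |b * (k:ℝ)| := by rw [abs_mul, abs_of_pos hb]
    have h3 : |b * (k:ℝ)| ≤ |Hf c k| + |Hf c k - b * k| := by
      calc |b * (k:ℝ)| = |Hf c k - (Hf c k - b * k)| := by ring_nf
        _ ≤ |Hf c k| + |Hf c k - b * k| := abs_sub _ _
    have h5 : (b/2) * |(k:ℝ)| ≤ |Hf c k| + C₂ := by nlinarith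
    have hb2 : (0:ℝ) < b^2 := by positivity
    have h6 : (b/2*|(k:ℝ)|)^2 ≤ (|Hf c k| + C₂)^2 := by
      have hl : (0:ℝ) ≤ b/2*|(k:ℝ)| := by positivity
      nlinarith
    have h7 : b^2 * (k:ℝ)^2 ≤ 8*(Hf c k)^2 + 8*C₂^2 := by
      nlinarith [h6, sq_abs ((k:ℝ)), sq_abs (Hf c k), sq_nonneg (|Hf c k| - C₂)]
    have h8 : (k:ℝ)^2 * b^2 ≤ (8/b^2*(Hf c k)^2 + 8/b^2*C₂^2) * b^2 := by
      have he : (8/b^2*(Hf c k)^2 + 8/b^2*C₂^2) * b^2 = 8*(Hf c k)^2 + 8*C₂^2 := by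
        field_simp
      rw [he]; nlinarith
    exact le_of_mul_le_mul_right h8 hb2
  -- expectation bounds
  have hXnn : ∀ n : ℕ, 0 ≤ Ex c n (fun m => (m:ℝ)^2) := by
    intro n
    have h := Ex_mono c hc n (f := fun _ => (0:ℝ)) (g := (fun m => (m:ℝ)^2)) (fun k => sq_nonneg _)
    rwa [Ex_const c hc n 0] at h
  have M1 : ∀ n : ℕ, Ex c n (fun m => (m:ℝ)^2) ≤ 8/b^2 * Ex c n (fun k => (Hf c k)^2) + 8/b^2*C₂^2 := by
    intro n
    have h := Ex_mono c hc n (f := (fun m => (m:ℝ)^2))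
      (g := fun k => 8/b^2 * (Hf c k)^2 + 8/b^2*C₂^2) (fun k => hk2 k)
    rwa [Ex_add, Ex_smul, Ex_const c hc n] at h
  have M2 := Ex_H2_eq c hc γ
  -- a priori linear bound on E_n X²
  obtain ⟨Cψ₀, hCψ₀0, hCψ₀⟩ := QB_ψ (b^2/16) (by positivity)
  have half : 8/b^2 * (b^2/16) = 1/2 := by field_simp; ring
  set K₂ : ℝ := 2*(8/b^2*Cψ₀ + 8/b^2*C₂^2) with hK₂def
  have hK₂0 : 0 ≤ K₂ := by positivity
  set K₁ : ℝ := 16*γ/b^2 with hK₁def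
  have hK₁0 : 0 ≤ K₁ := by positivity
  have M4 : ∀ n : ℕ, Ex c n (fun m => (m:ℝ)^2) ≤ K₁ * n + K₂ := by
    intro n
    have hψn : |Ex c n (psif c γ)| ≤ b^2/16 * Ex c n (fun m => (m:ℝ)^2) + Cψ₀ := by
      have h := abs_Ex_le c hc n (f := psif c γ)
        (g := fun k => b^2/16 * (k:ℝ)^2 + Cψ₀) (fun k => hCψ₀ k)
      rwa [Ex_add, Ex_smul, Ex_const c hc n] at h
    have h1 := M1 n
    rw [M2 n] at h1
    have h2 : Ex c n (psif c γ) ≤ b^2/16 * Ex c n (fun m => (m:ℝ)^2) + Cψ₀ := (abs_le.1 hψn).2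
    have h3 : Ex c n (fun m => (m:ℝ)^2) ≤ 8/b^2 * (b^2/16 * Ex c n (fun m => (m:ℝ)^2) + Cψ₀ + γ*n) + 8/b^2*C₂^2 := by
      have hb8 : (0:ℝ) ≤ 8/b^2 := by positivity
      nlinarith
    have h4 : 8/b^2 * (b^2/16 * Ex c n (fun m => (m:ℝ)^2) + Cψ₀ + γ*n)
        = 1/2 * Ex c n (fun m => (m:ℝ)^2) + 8/b^2*Cψ₀ + 8*γ/b^2*n := by
      field_simp; ring
    rw [h4] at h3
    have : 8*γ/b^2*n ≤ 8*γ/b^2*n := le_refl _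
    have hK₁n : K₁ * n = 2 * (8*γ/b^2*n) := by rw [hK₁def]; ring
    rw [hK₁n, hK₂def]
    linarith
  -- key quantitative estimate
  have KEY : ∀ ε > (0:ℝ), ∃ C, ∀ n : ℕ,
      |b^2 * Ex c n (fun m => (m:ℝ)^2) - γ * n| ≤ ε * n + C := by
    intro ε hε
    have hε' : (0:ℝ) < ε/(2*(K₁+1)) := by positivity
    obtain ⟨Cψ, hCψ0, hCψ⟩ := QB_ψ (ε/(2*(K₁+1))) hε'
    obtain ⟨CH, hCH0, hCH⟩ := QB_H2 (ε/(2*(K₁+1))) hε'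
    refine ⟨2*(ε/(2*(K₁+1)))*K₂ + Cψ + CH, fun n => ?_⟩
    have hψn : |Ex c n (psif c γ)| ≤ ε/(2*(K₁+1)) * Ex c n (fun m => (m:ℝ)^2) + Cψ := by
      have h := abs_Ex_le c hc n (f := psif c γ)
        (g := fun k => ε/(2*(K₁+1)) * (k:ℝ)^2 + Cψ) (fun k => hCψ k)
      rwa [Ex_add, Ex_smul, Ex_const c hc n] at h
    have hH2n : |Ex c n (fun k => (Hf c k)^2) - b^2 * Ex c n (fun m => (m:ℝ)^2)|
        ≤ ε/(2*(K₁+1)) * Ex c n (fun m => (m:ℝ)^2) + CH := by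
      have heq : Ex c n (fun k => (Hf c k)^2 - b^2*(k:ℝ)^2)
          = Ex c n (fun k => (Hf c k)^2) - b^2 * Ex c n (fun m => (m:ℝ)^2) := by
        rw [Ex_congr c n (g := fun k => (Hf c k)^2 + (-(b^2)) * (k:ℝ)^2)
          (fun k => by ring), Ex_add, Ex_smul]
        ring
      have h := abs_Ex_le c hc n (f := fun k => (Hf c k)^2 - b^2*(k:ℝ)^2)
        (g := fun k => ε/(2*(K₁+1)) * (k:ℝ)^2 + CH) (fun k => hCH k)
      rwa [Ex_add, Ex_smul, Ex_const c hc n, heq] at h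
    have hEx := M4 n
    have hExnn := hXnn n
    have hband : ε/(2*(K₁+1)) * Ex c n (fun m => (m:ℝ)^2) ≤ ε/(2*(K₁+1)) * (K₁*n + K₂) := by
      apply mul_le_mul_of_nonneg_left hEx (le_of_lt hε')
    have hcomb : |b^2 * Ex c n (fun m => (m:ℝ)^2) - γ * n|
        ≤ 2*(ε/(2*(K₁+1)) * (K₁*n + K₂)) + Cψ + CH := by
      have hsplit : b^2 * Ex c n (fun m => (m:ℝ)^2) - γ * n
          = (b^2 * Ex c n (fun m => (m:ℝ)^2) - Ex c n (fun k => (Hf c k)^2)) + Ex c n (psif c γ) := by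
        rw [M2 n]; ring
      rw [hsplit]
      calc |(b^2 * Ex c n (fun m => (m:ℝ)^2) - Ex c n (fun k => (Hf c k)^2)) + Ex c n (psif c γ)|
          ≤ |b^2 * Ex c n (fun m => (m:ℝ)^2) - Ex c n (fun k => (Hf c k)^2)| + |Ex c n (psif c γ)| :=
            abs_add_le _ _
        _ ≤ (ε/(2*(K₁+1)) * Ex c n (fun m => (m:ℝ)^2) + CH) + (ε/(2*(K₁+1)) * Ex c n (fun m => (m:ℝ)^2) + Cψ) := by
            rw [abs_sub_comm] at hH2n
            exact add_le_add hH2n hψn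
        _ ≤ 2*(ε/(2*(K₁+1)) * (K₁*n + K₂)) + Cψ + CH := by linarith
    have hfin : 2*(ε/(2*(K₁+1)) * (K₁*n + K₂))
        ≤ ε * n + 2*(ε/(2*(K₁+1)))*K₂ := by
      have hK₁1 : (0:ℝ) < K₁ + 1 := by linarith
      have h1 : 2*(ε/(2*(K₁+1))) * K₁ ≤ ε := by
        rw [show 2*(ε/(2*(K₁+1))) * K₁ = ε * K₁/(K₁+1) by
          field_simp]
        rw [div_le_iff₀ hK₁1]
        nlinarith
      have hn0 : (0:ℝ) ≤ (n:ℝ) := Nat.cast_nonneg n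
      have h2 := mul_le_mul_of_nonneg_right h1 hn0
      linarith [h2]
    linarith
  -- conclude
  have hgoal : γ/b^2 = (a*b)⁻¹ := by
    rw [hγdef]; field_simp
  rw [← hgoal]
  rw [Metric.tendsto_atTop]
  intro δ hδ
  have hδ' : (0:ℝ) < δ*b^2/2 := by positivity
  obtain ⟨C, hC⟩ := KEY (δ*b^2/2) hδ'
  refine ⟨max 1 (Nat.ceil (2*C/(δ*b^2)) + 1), fun n hn => ?_⟩
  have hn1 : 1 ≤ n := le_trans (le_max_left _ _) hn
  have hnR : (0:ℝ) < n := by exact_mod_cast hn1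
  have hnceil : Nat.ceil (2*C/(δ*b^2)) + 1 ≤ n := le_trans (le_max_right _ _) hn
  have hngt : 2*C/(δ*b^2) < (n:ℝ) := by
    have h1 : (2*C/(δ*b^2)) ≤ (Nat.ceil (2*C/(δ*b^2)) : ℝ) := Nat.le_ceil _
    have h2 : ((Nat.ceil (2*C/(δ*b^2)) : ℕ) : ℝ) < n := by
      exact_mod_cast Nat.lt_of_lt_of_le (Nat.lt_succ_self _) hnceil
    linarith
  have hCn : C/(b^2*n) < δ/2 := by
    rw [div_lt_iff₀ (by positivity)]
    rw [div_lt_iff₀ (by positivity)] at hngt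
    nlinarith
  rw [Real.dist_eq]
  have hb2 : (0:ℝ) < b^2 := by positivity
  have heq : Ex c n (fun m => (m:ℝ)^2) / n - γ/b^2 = (b^2 * Ex c n (fun m => (m:ℝ)^2) - γ*n)/(b^2*n) := by
    field_simp
  rw [heq, abs_div, abs_of_pos (by positivity : (0:ℝ) < b^2*n)]
  have h1 : |b^2 * Ex c n (fun m => (m:ℝ)^2) - γ*n| ≤ δ*b^2/2 * n + C := hC n
  calc |b^2 * Ex c n (fun m => (m:ℝ)^2) - γ*n| / (b^2*n) ≤ (δ*b^2/2 * n + C)/(b^2*n) := by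
        apply div_le_div_of_nonneg_right h1 (by positivity)
    _ = δ/2 + C/(b^2*n) := by field_simp
    _ < δ/2 + δ/2 := by linarith
    _ = δ := by ring

/-! ### Birkhoff's pointwise ergodic theorem (ergodic case) -/

section Birkhoff

variable {Ω : Type*} [MeasurableSpace Ω] {μ : Measure Ω} {T : Ω → Ω} {f : Ω → ℝ}

/-- Birkhoff sums. -/
def bS (T : Ω → Ω) (f : Ω → ℝ) (n : ℕ) (x : Ω) : ℝ := ∑ k ∈ Finset.range n, f (T^[k] x)

/-- Running maxima `max_{0 ≤ n ≤ N} S_n`, via the Garsia recursion. -/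
noncomputable def bM (T : Ω → Ω) (f : Ω → ℝ) : ℕ → Ω → ℝ
  | 0 => fun _ => 0
  | N + 1 => fun x => max 0 (f x + bM T f N (T x))

lemma bS_zero (x : Ω) : bS T f 0 x = 0 := by simp [bS]

lemma bS_one (x : Ω) : bS T f 1 x = f x := by simp [bS]

lemma bS_succ' (n : ℕ) (x : Ω) : bS T f (n+1) x = f x + bS T f n (T x) := by
  rw [bS, Finset.sum_range_succ']
  simp only [Function.iterate_succ_apply, Function.iterate_zero_apply]
  rw [bS]; ring

lemma bS_neg (n : ℕ) (x : Ω) : bS T (fun y => -f y) n x = -bS T f n x := by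
  simp [bS]

lemma bS_meas (hT : Measurable T) (hf : Measurable f) (n : ℕ) :
    Measurable (bS T f n) :=
  Finset.measurable_sum _ (fun k _ => hf.comp (hT.iterate k))

lemma bM_meas (hT : Measurable T) (hf : Measurable f) : ∀ N, Measurable (bM T f N)
  | 0 => measurable_const
  | N + 1 => measurable_const.max (hf.add ((bM_meas hT hf N).comp hT))

lemma bM_nonneg (N : ℕ) (x : Ω) : 0 ≤ bM T f N x := by
  cases N with
  | zero => exact le_refl 0
  | succ N => exact le_max_left _ _

lemma bM_int (hT : Measurable T) (hmp : MeasurePreserving T μ μ) (hf : Measurable f)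
    (hfi : Integrable f μ) : ∀ N, Integrable (bM T f N) μ
  | 0 => by simpa [bM] using integrable_zero Ω ℝ μ
  | N + 1 => by
      have hcomp : Integrable (fun x => bM T f N (T x)) μ :=
        (hmp.integrable_comp (bM_meas hT hf N).aestronglyMeasurable).2
          (bM_int hT hmp hf hfi N)
      have h2 : Integrable ((fun _ => (0:ℝ)) ⊔ (fun x => f x + bM T f N (T x))) μ :=
        (integrable_zero Ω ℝ μ).sup (hfi.add hcomp)
      exact h2

lemma bM_mono (N : ℕ) : ∀ x : Ω, bM T f N x ≤ bM T f (N+1) x := by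
  induction N with
  | zero => intro x; exact bM_nonneg 1 x
  | succ N ih =>
      intro x
      show max 0 (f x + bM T f N (T x)) ≤ max 0 (f x + bM T f (N+1) (T x))
      exact max_le_max (le_refl 0) (by linarith [ih (T x)])

lemma bS_le_bM : ∀ N n : ℕ, n ≤ N → ∀ x : Ω, bS T f n x ≤ bM T f N x := by
  intro N
  induction N with
  | zero =>
      intro n hn x
      interval_cases n
      rw [bS_zero]
      exact bM_nonneg 0 x
  | succ N ih =>
      intro n hn x
      cases n with
      | zero => rw [bS_zero]; exact bM_nonneg _ _
      | succ m =>
          rw [bS_succ']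
          have h1 := ih m (by omega) (T x)
          calc f x + bS T f m (T x) ≤ f x + bM T f N (T x) := by linarith
            _ ≤ max 0 (f x + bM T f N (T x)) := le_max_right _ _

lemma bM_pos_attained : ∀ N : ℕ, ∀ x : Ω, 0 < bM T f N x →
    ∃ n, 1 ≤ n ∧ n ≤ N ∧ bM T f N x ≤ bS T f n x := by
  intro N
  induction N with
  | zero => intro x hx; exact absurd hx (by simp [bM])
  | succ N ih =>
      intro x hx
      have ht : 0 < f x + bM T f N (T x) := by
        by_contra h
        push_neg at h
        have h0 : bM T f (N+1) x = 0 := max_eq_left h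
        rw [h0] at hx; exact lt_irrefl 0 hx
      have heq : bM T f (N+1) x = f x + bM T f N (T x) := max_eq_right ht.le
      rcases lt_or_ge 0 (bM T f N (T x)) with hpos | hnp
      · obtain ⟨m, hm1, hmN, hle⟩ := ih (T x) hpos
        refine ⟨m+1, by omega, by omega, ?_⟩
        rw [heq, bS_succ']
        linarith
      · have hz : bM T f N (T x) = 0 := le_antisymm hnp (bM_nonneg _ _)
        refine ⟨1, le_refl 1, by omega, ?_⟩
        rw [heq, hz, bS_one]
        linarith

/-- Integrals are invariant under a measure-preserving map. -/
lemma integral_comp_mp (hmp : MeasurePreserving T μ μ) {g : Ω → ℝ}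
    (hg : AEStronglyMeasurable g μ) : ∫ x, g (T x) ∂μ = ∫ x, g x ∂μ := by
  have h1 : ∫ y, g y ∂(Measure.map T μ) = ∫ x, g (T x) ∂μ :=
    integral_map hmp.measurable.aemeasurable (by rwa [hmp.map_eq])
  rw [← h1, hmp.map_eq]

/-- The maximal ergodic theorem. -/
theorem maximal_ergodic (hT : Measurable T) (hmp : MeasurePreserving T μ μ)
    (hf : Measurable f) (hfi : Integrable f μ) (N : ℕ) :
    0 ≤ ∫ x in {x | 0 < bM T f N x}, f x ∂μ := by
  set A := {x | 0 < bM T f N x} with hAdef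
  have hA : MeasurableSet A := measurableSet_lt measurable_const (bM_meas hT hf N)
  have hMi := bM_int hT hmp hf hfi N
  have hMTi : Integrable (fun x => bM T f N (T x)) μ :=
    (hmp.integrable_comp (bM_meas hT hf N).aestronglyMeasurable).2 hMi
  have key : ∀ x ∈ A, bM T f N x - bM T f N (T x) ≤ f x := by
    intro x hx
    have hx' : 0 < bM T f N x := hx
    cases N with
    | zero => exact absurd hx' (by simp [bM])
    | succ N =>
        have ht : 0 < f x + bM T f N (T x) := by
          by_contra h
          push_neg at h
          have h0 : bM T f (N+1) x = 0 := max_eq_left h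
          rw [h0] at hx'; exact lt_irrefl 0 hx'
        have heq : bM T f (N+1) x = f x + bM T f N (T x) := max_eq_right ht.le
        have hmono := bM_mono (T := T) (f := f) N (T x)
        linarith [heq]
  have step1 : ∫ x in A, (bM T f N x - bM T f N (T x)) ∂μ ≤ ∫ x in A, f x ∂μ :=
    setIntegral_mono_on ((hMi.sub hMTi).integrableOn) (hfi.integrableOn) hA key
  have step2 : ∫ x in A, bM T f N x ∂μ = ∫ x, bM T f N x ∂μ := by
    have hcompl : ∫ x in Aᶜ, bM T f N x ∂μ = 0 := by
      refine setIntegral_eq_zero_of_forall_eq_zero ?_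
      intro x hx
      simp only [hAdef, Set.mem_compl_iff, Set.mem_setOf_eq, not_lt] at hx
      exact le_antisymm hx (bM_nonneg _ _)
    have hsum := integral_add_compl hA hMi
    rw [hcompl] at hsum
    linarith
  have step3 : ∫ x in A, bM T f N (T x) ∂μ ≤ ∫ x, bM T f N x ∂μ := by
    have h1 : ∫ x in A, bM T f N (T x) ∂μ ≤ ∫ x, bM T f N (T x) ∂μ :=
      setIntegral_le_integral hMTi (Filter.Eventually.of_forall fun x => bM_nonneg _ _)
    rwa [integral_comp_mp hmp (bM_meas hT hf N).aestronglyMeasurable] at h1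
  have step4 : ∫ x in A, (bM T f N x - bM T f N (T x)) ∂μ
      = ∫ x in A, bM T f N x ∂μ - ∫ x in A, bM T f N (T x) ∂μ :=
    integral_sub (hMi.integrableOn) (hMTi.integrableOn)
  rw [step4, step2] at step1
  linarith

/-- The (invariant) event that `limsup Sₙ/n ≥ t`. -/
def Bset (T : Ω → Ω) (f : Ω → ℝ) (t : ℝ) : Set Ω :=
  ⋂ (m : ℕ), ⋂ (N : ℕ), ⋃ (n : ℕ), ⋃ (_ : N ≤ n),
    {x | (t - 1/((m:ℝ)+1)) * n < bS T f n x}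

lemma mem_Bset {t : ℝ} {x : Ω} :
    x ∈ Bset T f t ↔ ∀ m N : ℕ, ∃ n, N ≤ n ∧ (t - 1/((m:ℝ)+1)) * n < bS T f n x := by
  simp [Bset, Set.mem_iInter, Set.mem_iUnion]

lemma Bset_meas (hT : Measurable T) (hf : Measurable f) (t : ℝ) :
    MeasurableSet (Bset T f t) := by
  refine MeasurableSet.iInter fun m => MeasurableSet.iInter fun N =>
    MeasurableSet.iUnion fun n => MeasurableSet.iUnion fun _ => ?_
  exact measurableSet_lt measurable_const (bS_meas hT hf n)

lemma Bset_invariant (t : ℝ) : T ⁻¹' (Bset T f t) = Bset T f t := by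
  have hgap : ∀ m : ℕ, (0:ℝ) < 1/((m:ℝ)+1) - 1/((m:ℝ)+2) := by
    intro m
    rw [sub_pos, div_lt_div_iff₀ (by positivity) (by positivity)]
    linarith
  ext x
  simp only [Set.mem_preimage, mem_Bset]
  constructor
  · -- T x ∈ B → x ∈ B
    intro hTx m N
    obtain ⟨n₁, hn₁⟩ := exists_nat_gt ((t - 1/((m:ℝ)+1) - f x)/(1/((m:ℝ)+1) - 1/((m:ℝ)+2)))
    obtain ⟨n, hnN, hn⟩ := hTx (m+1) (max N n₁)
    have hcast : ((m+1 : ℕ):ℝ) + 1 = (m:ℝ) + 2 := by push_cast; ring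
    rw [hcast] at hn
    refine ⟨n+1, by omega, ?_⟩
    rw [bS_succ']
    have hnn₁ : (n₁:ℝ) ≤ n := by exact_mod_cast le_trans (le_max_right N n₁) hnN
    have hbig : (1/((m:ℝ)+1) - 1/((m:ℝ)+2)) * n > t - 1/((m:ℝ)+1) - f x := by
      have h2 : (t - 1/((m:ℝ)+1) - f x)/(1/((m:ℝ)+1) - 1/((m:ℝ)+2)) < (n:ℝ) := by linarith
      rw [div_lt_iff₀ (hgap m)] at h2
      linarith
    push_cast
    nlinarith [hn, hbig]
  · -- x ∈ B → T x ∈ B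
    intro hx m N
    obtain ⟨n₁, hn₁⟩ := exists_nat_gt ((f x - t + 1/((m:ℝ)+1))/(1/((m:ℝ)+1) - 1/((m:ℝ)+2)))
    obtain ⟨n, hnN, hn⟩ := hx (m+1) (max (N+1) n₁)
    have hcast : ((m+1 : ℕ):ℝ) + 1 = (m:ℝ) + 2 := by push_cast; ring
    rw [hcast] at hn
    have hn1 : 1 ≤ n := le_trans (le_trans (by omega) (le_max_left (N+1) n₁)) hnN
    refine ⟨n-1, by omega, ?_⟩
    have hsplit : bS T f n x = f x + bS T f (n-1) (T x) := by
      conv_lhs => rw [show n = (n-1)+1 by omega]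
      rw [bS_succ']
    have hnn₁ : (n₁:ℝ) ≤ n := by exact_mod_cast le_trans (le_max_right _ n₁) hnN
    have hbig : (1/((m:ℝ)+1) - 1/((m:ℝ)+2)) * n > f x - t + 1/((m:ℝ)+1) := by
      have h2 : (f x - t + 1/((m:ℝ)+1))/(1/((m:ℝ)+1) - 1/((m:ℝ)+2)) < (n:ℝ) := by linarith
      rw [div_lt_iff₀ (hgap m)] at h2
      linarith
    have hncast : ((n-1 : ℕ):ℝ) = (n:ℝ) - 1 := by
      have h3 : n - 1 + 1 = n := by omega
      have h4 : ((n-1:ℕ):ℝ) + 1 = (n:ℝ) := by exact_mod_cast congrArg (Nat.cast : ℕ → ℝ) h3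
      linarith
    rw [hncast]
    nlinarith [hn, hbig, hsplit]

/-- Birkhoff sums of `f - c` for a constant `c`. -/
lemma bS_sub_const (c : ℝ) (n : ℕ) (x : Ω) :
    bS T (fun y => f y - c) n x = bS T f n x - c * n := by
  simp [bS, Finset.sum_sub_distrib]
  ring

/-- Key null-set lemma: if `t > ∫ f`, then `Bset T f t` is null. -/
lemma Bset_null (hT : Ergodic T μ) [IsProbabilityMeasure μ]
    (hTm : Measurable T) (hf : Measurable f) (hfi : Integrable f μ)
    {t : ℝ} (ht : ∫ x, f x ∂μ < t) : μ (Bset T f t) = 0 := by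
  by_contra hB
  have hmeas := Bset_meas hTm hf (f := f) t
  have h01 := hT.toPreErgodic.prob_eq_zero_or_one hmeas (Bset_invariant t)
  have hB1 : μ (Bset T f t) = 1 := h01.resolve_left hB
  obtain ⟨m, hm⟩ := exists_nat_one_div_lt (show (0:ℝ) < t - ∫ x, f x ∂μ by linarith)
  set g : Ω → ℝ := fun y => f y - (t - 1/((m:ℝ)+1)) with hgdef
  have hgm : Measurable g := hf.sub measurable_const
  have hgi : Integrable g μ := hfi.sub (integrable_const _)
  have hgint : ∫ x, g x ∂μ < 0 := by
    rw [hgdef]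
    rw [integral_sub hfi (integrable_const _), integral_const]
    simp only [measure_univ, probReal_univ, one_smul, smul_eq_mul]
    linarith
  set D : Set Ω := {x | ∃ n, 1 ≤ n ∧ 0 < bS T g n x} with hDdef
  have hDmeas : MeasurableSet D := by
    have : D = ⋃ (n : ℕ), ⋃ (_ : 1 ≤ n), {x | 0 < bS T g n x} := by
      ext y; simp [hDdef]
    rw [this]
    exact MeasurableSet.iUnion fun n => MeasurableSet.iUnion fun _ =>
      measurableSet_lt measurable_const (bS_meas hTm hgm n)
  have hBD : Bset T f t ⊆ D := by
    intro x hx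
    obtain ⟨n, hn1, hlt⟩ := (mem_Bset.1 hx) m 1
    refine ⟨n, hn1, ?_⟩
    rw [bS_sub_const]
    linarith
  have hD1 : μ Dᶜ = 0 := by
    have h1 : μ D = 1 := le_antisymm prob_le_one (hB1 ▸ measure_mono hBD)
    rw [measure_compl hDmeas (measure_ne_top μ D), h1]
    simp
  have hAmeas : ∀ N : ℕ, MeasurableSet {x | 0 < bM T g N x} := fun N =>
    measurableSet_lt measurable_const (bM_meas hTm hgm N)
  have hAmono : Monotone (fun N : ℕ => {x | 0 < bM T g N x}) := by
    refine monotone_nat_of_le_succ fun N x hx => ?_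
    exact lt_of_lt_of_le hx (bM_mono N x)
  have hAcup : (⋃ N, {x | 0 < bM T g N x}) = D := by
    ext x
    simp only [Set.mem_iUnion, Set.mem_setOf_eq, hDdef]
    constructor
    · rintro ⟨N, hN⟩
      obtain ⟨n, hn1, hnN, hle⟩ := bM_pos_attained N x hN
      exact ⟨n, hn1, lt_of_lt_of_le hN hle⟩
    · rintro ⟨n, hn1, hpos⟩
      exact ⟨n, lt_of_lt_of_le hpos (bS_le_bM n n (le_refl n) x)⟩
  have htend := tendsto_setIntegral_of_monotone hAmeas hAmono
    (hgi.integrableOn : IntegrableOn g (⋃ N, {x | 0 < bM T g N x}) μ)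
  rw [hAcup] at htend
  have hlim : 0 ≤ ∫ x in D, g x ∂μ :=
    ge_of_tendsto' htend (fun N => maximal_ergodic hTm hT.toMeasurePreserving hgm hgi N)
  have hDfull : ∫ x in D, g x ∂μ = ∫ x, g x ∂μ := by
    have hsum := integral_add_compl hDmeas hgi
    have hz : ∫ x in Dᶜ, g x ∂μ = 0 := by
      have : μ.restrict Dᶜ = 0 := by
        rw [Measure.restrict_eq_zero]; exact hD1
      rw [this, integral_zero_measure]
    linarith
  rw [hDfull] at hlim
  linarith

/-- Birkhoff's pointwise ergodic theorem, ergodic case. -/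
theorem birkhoff_ergodic [IsProbabilityMeasure μ] (hT : Ergodic T μ)
    (hTm : Measurable T) (hf : Measurable f) (hfi : Integrable f μ) :
    ∀ᵐ x ∂μ, Filter.Tendsto (fun n : ℕ => bS T f n x / n) Filter.atTop
      (nhds (∫ x, f x ∂μ)) := by
  set I : ℝ := ∫ x, f x ∂μ with hIdef
  have hup : ∀ q : ℕ, μ (Bset T f (I + 1/((q:ℝ)+1))) = 0 := by
    intro q
    have h0 : (0:ℝ) < 1/((q:ℝ)+1) := by positivity
    exact Bset_null hT hTm hf hfi (by linarith)
  have hdown : ∀ q : ℕ, μ (Bset T (fun y => -f y) (-I + 1/((q:ℝ)+1))) = 0 := by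
    intro q
    refine Bset_null hT hTm hf.neg hfi.neg ?_
    simp only [Pi.neg_apply]
    rw [integral_neg]
    have : (0:ℝ) < 1/((q:ℝ)+1) := by positivity
    linarith
  have haeup : ∀ᵐ x ∂μ, ∀ q : ℕ, x ∉ Bset T f (I + 1/((q:ℝ)+1)) := by
    rw [MeasureTheory.ae_all_iff]
    intro q
    rw [MeasureTheory.ae_iff]
    simpa using hup q
  have haedown : ∀ᵐ x ∂μ, ∀ q : ℕ, x ∉ Bset T (fun y => -f y) (-I + 1/((q:ℝ)+1)) := by
    rw [MeasureTheory.ae_all_iff]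
    intro q
    rw [MeasureTheory.ae_iff]
    simpa using hdown q
  filter_upwards [haeup, haedown] with x hxup hxdown
  rw [Metric.tendsto_atTop]
  intro ε hε
  obtain ⟨q, hq⟩ := exists_nat_one_div_lt hε
  -- upper bound
  have h1 : ∃ N : ℕ, ∀ n ≥ N, bS T f n x ≤ (I + 1/((q:ℝ)+1)) * n := by
    have hnot := hxup q
    rw [mem_Bset] at hnot
    push_neg at hnot
    obtain ⟨m, N, hN⟩ := hnot
    refine ⟨N, fun n hn => ?_⟩
    have h2 := hN n hn
    have h3 : (0:ℝ) < 1/((m:ℝ)+1) := by positivity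
    have h4 : (0:ℝ) ≤ (n:ℝ) := Nat.cast_nonneg n
    nlinarith
  have h2 : ∃ N : ℕ, ∀ n ≥ N, -(bS T f n x) ≤ (-I + 1/((q:ℝ)+1)) * n := by
    have hnot := hxdown q
    rw [mem_Bset] at hnot
    push_neg at hnot
    obtain ⟨m, N, hN⟩ := hnot
    refine ⟨N, fun n hn => ?_⟩
    have h2' := hN n hn
    rw [bS_neg] at h2'
    have h3 : (0:ℝ) < 1/((m:ℝ)+1) := by positivity
    have h4 : (0:ℝ) ≤ (n:ℝ) := Nat.cast_nonneg n
    nlinarith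
  obtain ⟨N₁, hN₁⟩ := h1
  obtain ⟨N₂, hN₂⟩ := h2
  refine ⟨max (max N₁ N₂) 1, fun n hn => ?_⟩
  have hn1 : 1 ≤ n := le_trans (le_max_right _ 1) hn
  have hnn : (0:ℝ) < n := by exact_mod_cast hn1
  have hu := hN₁ n (le_trans (le_trans (le_max_left N₁ N₂) (le_max_left _ 1)) hn)
  have hl := hN₂ n (le_trans (le_trans (le_max_right N₁ N₂) (le_max_left _ 1)) hn)
  have hub : bS T f n x / n ≤ I + 1/((q:ℝ)+1) := by
    rw [div_le_iff₀ hnn]; linarith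
  have hlb : (-(bS T f n x)) / n ≤ -I + 1/((q:ℝ)+1) := by
    rw [div_le_iff₀ hnn]; linarith
  rw [neg_div] at hlb
  rw [Real.dist_eq, abs_lt]
  constructor
  · linarith
  · linarith

end Birkhoff

/-! ### From Birkhoff limits to the linear-growth bounds -/



lemma linBnd_of_tendsto {u : ℤ → ℝ} {a : ℝ}
    (hp : Filter.Tendsto (fun n : ℕ => zsum u (n:ℤ) / n) Filter.atTop (nhds a))
    (hm : Filter.Tendsto (fun n : ℕ => -(zsum u (-(n:ℤ))) / n) Filter.atTop (nhds a)) :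
    LinBnd (fun k => zsum u k - a * k) := by
  intro ε hε
  rw [Metric.tendsto_atTop] at hp hm
  obtain ⟨N₁, hN₁⟩ := hp ε hε
  obtain ⟨N₂, hN₂⟩ := hm ε hε
  set N : ℕ := max N₁ N₂ with hNdef
  set C : ℝ := ∑ j ∈ Finset.Icc (-(N:ℤ)) (N:ℤ), |zsum u j - a * j| with hCdef
  have hC0 : 0 ≤ C := Finset.sum_nonneg fun j _ => abs_nonneg _
  refine ⟨C, hC0, fun k => ?_⟩
  show |zsum u k - a * k| ≤ ε * |(k:ℝ)| + C
  rcases le_or_gt k (N:ℤ) with hk1 | hk1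
  · rcases le_or_gt (-(N:ℤ)) k with hk2 | hk2
    · -- |k| ≤ N
      have hmem : k ∈ Finset.Icc (-(N:ℤ)) (N:ℤ) := Finset.mem_Icc.2 ⟨hk2, hk1⟩
      have h1 : |zsum u k - a * k| ≤ C :=
        Finset.single_le_sum (f := fun j => |zsum u j - a * j|)
          (fun j _ => abs_nonneg _) hmem
      have h2 : 0 ≤ ε * |(k:ℝ)| := mul_nonneg hε.le (abs_nonneg _)
      linarith
    · -- k < -N
      set n : ℕ := (-k).toNat with hndef
      have hkn : k = -(n:ℤ) := by omega
      have hnN : N₂ ≤ n := by omega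
      have hd := hN₂ n hnN
      rw [Real.dist_eq] at hd
      have hn0 : (0:ℝ) < n := by
        have : 1 ≤ n := by omega
        exact_mod_cast this
      have h1 : |(-(zsum u (-(n:ℤ)))) - a * n| ≤ ε * n := by
        have heq : -(zsum u (-(n:ℤ))) - a*n = (-(zsum u (-(n:ℤ)))/n - a)*n := by
          rw [sub_mul, div_mul_cancel₀ _ hn0.ne']
        rw [heq, abs_mul, abs_of_pos hn0]
        exact mul_le_mul_of_nonneg_right hd.le hn0.le
      have h3 : zsum u k - a * k = -((-(zsum u (-(n:ℤ)))) - a * n) := by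
        rw [hkn]; push_cast; ring
      rw [h3, abs_neg]
      have h4 : ε * (n:ℝ) ≤ ε * |(k:ℝ)| := by
        have : (n:ℝ) ≤ |(k:ℝ)| := by
          rw [hkn]; push_cast; rw [abs_neg, abs_of_nonneg hn0.le]
        exact mul_le_mul_of_nonneg_left this hε.le
      linarith
  · -- k > N
    set n : ℕ := k.toNat with hndef
    have hkn : k = (n:ℤ) := by omega
    have hnN : N₁ ≤ n := by omega
    have hd := hN₁ n hnN
    rw [Real.dist_eq] at hd
    have hn0 : (0:ℝ) < n := by
      have : 1 ≤ n := by omega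
      exact_mod_cast this
    have h1 : |zsum u (n:ℤ) - a * n| ≤ ε * n := by
      have heq : zsum u (n:ℤ) - a*n = (zsum u (n:ℤ)/n - a)*n := by
        rw [sub_mul, div_mul_cancel₀ _ hn0.ne']
      rw [heq, abs_mul, abs_of_pos hn0]
      exact mul_le_mul_of_nonneg_right hd.le hn0.le
    rw [hkn]
    push_cast
    push_cast at h1
    have habs : |(n:ℝ)| = (n:ℝ) := abs_of_nonneg hn0.le
    rw [habs]
    linarith

/-- ergodicity passes to the inverse. -/
lemma ergodic_symm {Ω : Type*} [MeasurableSpace Ω] {μ : Measure Ω} (T : Ω ≃ᵐ Ω)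
    (hT : Ergodic T μ) : Ergodic ⇑T.symm μ := by
  refine ⟨MeasurePreserving.symm T hT.toMeasurePreserving, ⟨fun s hs hinv => ?_⟩⟩
  apply hT.toPreErgodic.aeconst_set hs
  have h1 : ⇑T ⁻¹' (⇑T.symm ⁻¹' s) = s := by
    rw [← Set.preimage_comp, MeasurableEquiv.symm_comp_self, Set.preimage_id]
  have h2 := congrArg (fun u => ⇑T ⁻¹' u) hinv
  rw [h1] at h2
  exact h2.symm

lemma zIter_mp {Ω : Type*} [MeasurableSpace Ω] {μ : Measure Ω} (T : Ω ≃ᵐ Ω)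
    (hmp : MeasurePreserving ⇑T μ μ) (k : ℤ) : MeasurePreserving (zIter T k) μ μ := by
  by_cases h : 0 ≤ k
  · have h2 : zIter T k = fun ω => T^[k.toNat] ω := by
      funext ω; simp only [zIter, if_pos h]
    rw [h2]
    exact hmp.iterate _
  · have h2 : zIter T k = fun ω => T.symm^[(-k).toNat] ω := by
      funext ω; simp only [zIter, if_neg h]
    rw [h2]
    exact (MeasurePreserving.symm T hmp).iterate _

theorem stmt_6' {Ω : Type*} [MeasurableSpace Ω] (μ : Measure Ω) [IsProbabilityMeasure μ]
    (T : Ω ≃ᵐ Ω) (hT : Ergodic T μ)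
    (c : Ω → ℝ) (hcmeas : Measurable c) (hc : ∀ᵐ ω ∂μ, 0 < c ω)
    (hcint : Integrable c μ) (hcinvint : Integrable (fun ω => (c ω)⁻¹) μ) :
    ∀ᵐ ω ∂μ,
      Filter.Tendsto
        (fun n : ℕ =>
          (∑ m ∈ Finset.Icc (-(n : ℤ)) (n : ℤ),
            walkLaw (fun k => c (zIter T k ω)) n m * (m : ℝ) ^ 2) / (n : ℝ))
        Filter.atTop
        (nhds (((∫ ω', c ω' ∂μ) * (∫ ω', (c ω')⁻¹ ∂μ))⁻¹)) := by
  have hTmp : MeasurePreserving ⇑T μ μ := hT.toMeasurePreserving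
  have hSmp : MeasurePreserving ⇑T.symm μ μ := MeasurePreserving.symm T hTmp
  have hTsym : Ergodic ⇑T.symm μ := ergodic_symm T hT
  set a : ℝ := ∫ ω', c ω' ∂μ with hadef
  set b : ℝ := ∫ ω', (c ω')⁻¹ ∂μ with hbdef
  -- positivity of the integrals
  have hposint : ∀ (g : Ω → ℝ), Measurable g → (∀ᵐ ω ∂μ, 0 < g ω) → Integrable g μ →
      0 < ∫ ω, g ω ∂μ := by
    intro g hgm hg hgi
    rw [integral_pos_iff_support_of_nonneg_ae (hg.mono fun ω h => h.le) hgi]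
    have h1 : {ω : Ω | 0 < g ω} ⊆ Function.support g := fun ω h => ne_of_gt h
    have hcompl : μ {ω : Ω | 0 < g ω}ᶜ = 0 := by
      rw [ae_iff] at hg
      exact hg
    have h2 : μ {ω : Ω | 0 < g ω} = 1 :=
      (prob_compl_eq_zero_iff (measurableSet_lt measurable_const hgm)).1 hcompl
    calc (0:ENNReal) < 1 := by norm_num
      _ = μ {ω : Ω | 0 < g ω} := h2.symm
      _ ≤ μ (Function.support g) := measure_mono h1
  have ha : 0 < a := hposint c hcmeas hc hcint
  have hb : 0 < b := hposint _ hcmeas.inv (hc.mono fun ω h => inv_pos.2 h) hcinvint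
  -- a.e. positivity along the whole orbit
  have hcpos_ae : ∀ᵐ ω ∂μ, ∀ k : ℤ, 0 < c (zIter T k ω) := by
    rw [MeasureTheory.ae_all_iff]
    intro k
    rw [ae_iff]
    have hset : MeasurableSet {x : Ω | ¬ (0 < c x)} := by
      have he : {x : Ω | ¬ (0 < c x)} = {x | c x ≤ 0} := by ext x; simp [not_lt]
      rw [he]; exact measurableSet_le hcmeas measurable_const
    have h1 : {ω : Ω | ¬ 0 < c (zIter T k ω)} = (zIter T k) ⁻¹' {x | ¬ (0 < c x)} := rfl
    rw [h1, (zIter_mp T hTmp k).measure_preimage hset.nullMeasurableSet]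
    rw [ae_iff] at hc
    exact hc
  -- Birkhoff limits
  have hint2 : Integrable (fun x => c (T.symm x)) μ :=
    (hSmp.integrable_comp hcmeas.aestronglyMeasurable).2 hcint
  have hint4 : Integrable (fun x => (c (T.symm x))⁻¹) μ :=
    (hSmp.integrable_comp hcmeas.inv.aestronglyMeasurable).2 hcinvint
  have hbk1 := birkhoff_ergodic hT T.measurable hcmeas hcint
  have hbk2 := birkhoff_ergodic hT T.measurable hcmeas.inv hcinvint
  have hm3 : Measurable (fun x => c (T.symm x)) := hcmeas.comp T.symm.measurable
  have hm4 : Measurable (fun x => (c (T.symm x))⁻¹) := hcmeas.inv.comp T.symm.measurable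
  have hbk3 := birkhoff_ergodic hTsym T.symm.measurable hm3 hint2
  have hbk4 := birkhoff_ergodic hTsym T.symm.measurable hm4 hint4
  have hieq3 : ∫ x, c (T.symm x) ∂μ = a := integral_comp_mp hSmp hcmeas.aestronglyMeasurable
  have hieq4 : ∫ x, (c (T.symm x))⁻¹ ∂μ = b :=
    integral_comp_mp hSmp hcmeas.inv.aestronglyMeasurable
  rw [hieq3] at hbk3
  rw [hieq4] at hbk4
  filter_upwards [hcpos_ae, hbk1, hbk2, hbk3, hbk4] with ω h0 h1 h2 h3 h4
  set cω : ℤ → ℝ := fun k => c (zIter T k ω) with hcωdef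
  -- identification of signed sums with Birkhoff sums
  have hpos_eq : ∀ (g : Ω → ℝ) (n : ℕ),
      zsum (fun k => g (zIter T k ω)) (n:ℤ) = bS ⇑T g n ω := by
    intro g n
    rw [zsum_natCast]
    refine Finset.sum_congr rfl fun k _ => ?_
    show g (zIter T (k:ℤ) ω) = g (T^[k] ω)
    simp only [zIter, if_pos (Int.natCast_nonneg k), Int.toNat_natCast]
  have hneg_eq : ∀ (g : Ω → ℝ) (n : ℕ),
      zsum (fun k => g (zIter T k ω)) (-(n:ℤ))
        = -bS ⇑T.symm (fun x => g (T.symm x)) n ω := by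
    intro g n
    rw [zsum_neg_natCast]
    congr 1
    refine Finset.sum_congr rfl fun k _ => ?_
    show g (zIter T (-1 - (k:ℤ)) ω) = g (T.symm (T.symm^[k] ω))
    have hneg : ¬ (0 ≤ -1 - (k:ℤ)) := by omega
    have htn : (-(-1 - (k:ℤ))).toNat = k + 1 := by omega
    simp only [zIter, if_neg hneg, htn, Function.iterate_succ_apply']
  -- the linear growth bounds
  have hA : LinBnd (fun k => zsum cω k - a * k) := by
    refine linBnd_of_tendsto ?_ ?_
    · refine h1.congr fun n => ?_
      rw [hpos_eq c n]
    · refine h3.congr fun n => ?_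
      rw [hneg_eq c n, neg_neg]
  have hB : LinBnd (fun k => zsum (fun j => (cω j)⁻¹) k - b * k) := by
    refine linBnd_of_tendsto ?_ ?_
    · refine h2.congr fun n => ?_
      rw [hpos_eq (fun x => (c x)⁻¹) n]; rfl
    · refine h4.congr fun n => ?_
      rw [hneg_eq (fun x => (c x)⁻¹) n, neg_neg]
  have := det_main cω h0 a b ha hb hA hB
  exact this

theorem stmt_6 {Ω : Type*} [MeasurableSpace Ω] (μ : Measure Ω) [IsProbabilityMeasure μ]
    (T : Ω ≃ᵐ Ω) (hT : Ergodic T μ)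
    (c : Ω → ℝ) (hcmeas : Measurable c) (hc : ∀ᵐ ω ∂μ, 0 < c ω)
    (hcint : Integrable c μ) (hcinvint : Integrable (fun ω => (c ω)⁻¹) μ) :
    ∀ᵐ ω ∂μ,
      Tendsto
        (fun n : ℕ =>
          (∑ m ∈ Finset.Icc (-(n : ℤ)) (n : ℤ),
            walkLaw (fun k => c (zIter T k ω)) n m * (m : ℝ) ^ 2) / (n : ℝ))
        atTop
        (nhds (((∫ ω', c ω' ∂μ) * (∫ ω', (c ω')⁻¹ ∂μ))⁻¹)) := by
  exact stmt_6' μ T hT c hcmeas hc hcint hcinvint
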